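/- Let Z be a gauge field on T and define μ : T → ℝ by μ(x) := −(τZ)(y,x) + L^{-3} Σ_{x'∈B(y)} (τZ)(y,x') for x ∈ B(y), y ∈ T'. Then for every y ∈ T': (τZ)(y,x) + μ(x) − μ(y) = 0 for all x ∈ B(y), and Σ_{x∈B(y)} μ(x) = 0. Moreover μ is the unique function T → ℝ with these two properties; equivalently, τ(Z + ∂μ)(y,x) = 0 for all x ∈ B(y) and all y ∈ T'. -/

import Mathlib

open Finset

noncomputable section

/-- Points of the discrete torus `(ℤ/Nℤ)³`. -/
abbrev TPt (N : ℕ) : Type := Fin 3 → ZMod N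

/-- The standard unit vector `e_μ` in the torus. -/
def unitVec (N : ℕ) (μ : Fin 3) : TPt N := fun i => if i = μ then 1 else 0

/-- The representative of `a ∈ ℤ/Nℤ` in the symmetric range `{-(N-1)/2, …, (N-1)/2}`
(for odd `N`). -/
def symRep (N : ℕ) (a : ZMod N) : ℤ :=
  if 2 * (a.val : ℤ) + 1 ≤ (N : ℤ) then (a.val : ℤ) else (a.val : ℤ) - (N : ℤ)

/-- Shift a torus point by `k` steps in direction `μ`. -/
def shiftT {N : ℕ} (z : TPt N) (μ : Fin 3) (k : ℤ) : TPt N :=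
  fun i => if i = μ then z i + (k : ZMod N) else z i

/-- The sum of the gauge field `A` along the straight lattice path from `z` to `z + t·e_μ`. -/
def segT {N : ℕ} (A : TPt N → TPt N → ℝ) (z : TPt N) (μ : Fin 3) (t : ℤ) : ℝ :=
  if 0 ≤ t then ∑ j ∈ Finset.range t.toNat, A (shiftT z μ (j : ℤ)) (shiftT z μ ((j : ℤ) + 1))
  else ∑ j ∈ Finset.range (-t).toNat, A (shiftT z μ (-(j : ℤ))) (shiftT z μ (-(j : ℤ) - 1))

/-- The field strength `dA` on the plaquette based at `x` spanned by `e_μ, e_ν`. -/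
def plaqT {N : ℕ} (A : TPt N → TPt N → ℝ) (x : TPt N) (μ ν : Fin 3) : ℝ :=
  A x (x + unitVec N μ) + A (x + unitVec N μ) (x + unitVec N μ + unitVec N ν)
    + A (x + unitVec N μ + unitVec N ν) (x + unitVec N ν) + A (x + unitVec N ν) x

/-- The corner of the rectilinear path `Γ^π_{yx}` reached after the first `m` coordinate
moves. -/
def interPtT {N : ℕ} (y x : TPt N) (π : Equiv.Perm (Fin 3)) (m : ℕ) : TPt N :=
  fun i => if ((π.symm i : Fin 3) : ℕ) < m then x i else y i

/-- `A(Γ^π_{yx})`: the sum of `A` along the rectilinear path (not wrapping around the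
torus) from `y` to `x`, moving the coordinates to their final values in the order
`π 0, π 1, π 2`; the coordinate increments are the symmetric representatives of `x - y`. -/
def gammaSumT {N : ℕ} (A : TPt N → TPt N → ℝ) (π : Equiv.Perm (Fin 3)) (y x : TPt N) : ℝ :=
  ∑ m : Fin 3, segT A (interPtT y x π (m : ℕ)) (π m) (symRep N (x (π m) - y (π m)))

/-- `(τA)(y,x) = (1/6) Σ_π A(Γ^π_{yx})`, averaged over the `3! = 6` permutations. -/
def tauBlk {N : ℕ} (A : TPt N → TPt N → ℝ) (y x : TPt N) : ℝ :=
  (1 / 6) * ∑ π : Equiv.Perm (Fin 3), gammaSumT A π y x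

/-- The block of radius `R` centered at `y`: all `x` whose coordinates relative to `y`
have symmetric representative of absolute value at most `R`. -/
def blockF (N : ℕ) [NeZero N] (R : ℤ) (y : TPt N) : Finset (TPt N) :=
  Finset.univ.filter fun x => ∀ i, |symRep N (x i - y i)| ≤ R

/-- Membership in the coarse lattice `(Lℤ/Nℤ)³ ⊆ (ℤ/Nℤ)³`. -/
def isCoarse (L N : ℕ) (y : TPt N) : Prop :=
  ∀ i, ∃ c : ZMod N, y i = (L : ZMod N) * c

/-- The coarse unit vector `L·e_μ`. -/
def cUnitVec (L N : ℕ) (μ : Fin 3) : TPt N := fun i => if i = μ then (L : ZMod N) else 0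

/-- The block-averaged field on coarse bonds:
`(QA)(y, y+Le_μ) = L⁻⁴ Σ_{x ∈ B(y)} A(Γ_{x,x+Le_μ})`. -/
def Qc (L : ℕ) {N : ℕ} [NeZero N] (A : TPt N → TPt N → ℝ) (y : TPt N) (μ : Fin 3) : ℝ :=
  ((L : ℝ) ^ 4)⁻¹ * ∑ x ∈ blockF N (((L : ℤ) - 1) / 2) y, segT A x μ (L : ℤ)

/-- The representative in `{-(L-1)/2, …, (L-1)/2}` of `a` modulo `L` (for odd `L`):
the offset of `a` from the nearest point of the coarse lattice `Lℤ/Nℤ`. -/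
def nearRes (L : ℕ) {N : ℕ} (a : ZMod N) : ℤ :=
  if 2 * ((a.val % L : ℕ) : ℤ) + 1 ≤ (L : ℤ) then ((a.val % L : ℕ) : ℤ)
  else ((a.val % L : ℕ) : ℤ) - (L : ℤ)

/-- The coarse site `y ∈ T'` whose block `B(y)` contains `x`. -/
def coarsePart (L : ℕ) {N : ℕ} (x : TPt N) : TPt N :=
  fun i => x i - ((nearRes L (x i) : ℤ) : ZMod N)

/-- The map `ℳ`: for `x ∈ B(y)`,
`(ℳZ)(x) = −(τZ)(y,x) + L⁻³ Σ_{x' ∈ B(y)} (τZ)(y,x')`. -/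
def Mmap (L : ℕ) {N : ℕ} [NeZero N] (Z : TPt N → TPt N → ℝ) (x : TPt N) : ℝ :=
  - tauBlk Z (coarsePart L x) x
    + ((L : ℝ) ^ 3)⁻¹ *
        ∑ x' ∈ blockF N (((L : ℤ) - 1) / 2) (coarsePart L x), tauBlk Z (coarsePart L x) x'

lemma symRep_cast {N : ℕ} [NeZero N] (a : ZMod N) : ((symRep N a : ℤ) : ZMod N) = a := by
  unfold symRep
  split <;> push_cast <;> simp [ZMod.natCast_rightInverse a]

lemma symRep_intCast {N : ℕ} [NeZero N] {t : ℤ} (ht1 : -(N:ℤ) < 2*t) (ht2 : 2*t < (N:ℤ)) :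
    symRep N ((t : ℤ) : ZMod N) = t := by
  have h := ZMod.val_intCast (n := N) t
  have hN : 0 < (N : ℤ) := by exact_mod_cast Nat.pos_of_ne_zero (NeZero.ne N)
  unfold symRep
  rcases le_or_gt 0 t with h0 | h0
  · have : t % (N : ℤ) = t := Int.emod_eq_of_lt h0 (by omega)
    rw [h, this]
    split <;> omega
  · have : t % (N : ℤ) = t + N := by
      rw [show t % (N:ℤ) = (t + N) % N by simp [Int.add_mul_emod_self_left]]
      exact Int.emod_eq_of_lt (by omega) (by omega)
    rw [h, this]
    split <;> omega

lemma symRep_zero {N : ℕ} [NeZero N] : symRep N 0 = 0 := by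
  have hN : 0 < (N : ℤ) := by exact_mod_cast Nat.pos_of_ne_zero (NeZero.ne N)
  have : (((0:ℤ)) : ZMod N) = 0 := by push_cast; rfl
  rw [← this, symRep_intCast (by omega) (by omega)]

lemma cast_val_eq {N : ℕ} [NeZero N] (a : ZMod N) : ((a.val : ℕ) : ZMod N) = a :=
  ZMod.natCast_rightInverse a

lemma nearRes_bound {L N : ℕ} (hodd : Odd L) (a : ZMod N) :
    -(L:ℤ) < 2 * nearRes L a ∧ 2 * nearRes L a < L := by
  obtain ⟨k, hk⟩ := hodd
  have h1 : a.val % L < L := Nat.mod_lt _ (by omega)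
  unfold nearRes
  split_ifs <;> constructor <;> omega

lemma nearRes_modeq {L N : ℕ} (a : ZMod N) : ∃ k : ℤ, (a.val : ℤ) - nearRes L a = L * k := by
  have h := Int.mul_ediv_add_emod (a.val : ℤ) (L : ℤ)
  have h2 : ((a.val % L : ℕ) : ℤ) = (a.val : ℤ) % (L : ℤ) := by push_cast; ring
  unfold nearRes
  split_ifs
  · exact ⟨(a.val : ℤ) / (L : ℤ), by omega⟩
  · exact ⟨(a.val : ℤ) / (L : ℤ) + 1, by rw [mul_add, mul_one]; omega⟩

lemma mem_blockF {N : ℕ} [NeZero N] {R : ℤ} {y x : TPt N} :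
    x ∈ blockF N R y ↔ ∀ i, |symRep N (x i - y i)| ≤ R := by
  simp [blockF]

lemma coarsePart_isCoarse {L N : ℕ} [NeZero N] (x : TPt N) : isCoarse L N (coarsePart L x) := by
  intro i
  obtain ⟨k, hk⟩ := nearRes_modeq (L := L) (x i)
  refine ⟨((k : ℤ) : ZMod N), ?_⟩
  have h1 : coarsePart L x i = (((x i).val - nearRes L (x i) : ℤ) : ZMod N) := by
    unfold coarsePart
    push_cast
    rw [cast_val_eq]
  rw [h1, hk]
  push_cast
  ring

lemma mem_blockF_coarsePart {L N : ℕ} [NeZero N] (hL : Odd L) (hLN : (L:ℤ) ≤ (N:ℤ))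
    (x : TPt N) : x ∈ blockF N (((L : ℤ) - 1) / 2) (coarsePart L x) := by
  rw [mem_blockF]
  intro i
  obtain ⟨hb1, hb2⟩ := nearRes_bound (N := N) hL (x i)
  have hxy : x i - coarsePart L x i = ((nearRes L (x i) : ℤ) : ZMod N) := by
    unfold coarsePart; ring
  rw [hxy, symRep_intCast (by omega) (by omega), abs_le]
  constructor <;> omega

lemma coarsePart_eq_of_mem {L N : ℕ} [NeZero N] (hodd : Odd L) (hL3 : 3 ≤ L)
    (hdvd : (L:ℤ) ∣ (N:ℤ)) (hLN : (L:ℤ) ≤ (N:ℤ)) {y x : TPt N}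
    (hy : isCoarse L N y) (hx : x ∈ blockF N (((L : ℤ) - 1) / 2) y) :
    coarsePart L x = y := by
  funext i
  obtain ⟨k, hodd'⟩ := hodd
  set d : ℤ := symRep N (x i - y i) with hd
  have hdb : |d| ≤ ((L:ℤ) - 1) / 2 := mem_blockF.mp hx i
  obtain ⟨hdb1, hdb2⟩ : -(L:ℤ) < 2 * d ∧ 2 * d < L := by
    rcases abs_cases d with ⟨he, _⟩ | ⟨he, _⟩ <;> omega
  have hcast : ((d : ℤ) : ZMod N) = x i - y i := symRep_cast _
  -- y i has val divisible by L
  obtain ⟨c, hc⟩ := hy i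
  have hyval : (L:ℤ) ∣ ((y i).val : ℤ) := by
    have h1 : (y i).val = (L * c.val) % N := by
      conv_lhs => rw [hc, ← cast_val_eq c]
      rw [← Nat.cast_mul, ZMod.val_natCast]
    have h2 : (L * c.val) % N % L = 0 := by
      rw [Nat.mod_mod_of_dvd _ (by exact_mod_cast hdvd), Nat.mul_mod_right]
    rw [h1]
    exact_mod_cast (Int.natCast_dvd_natCast.mpr (Nat.dvd_of_mod_eq_zero h2))
  -- congruence: N ∣ (y.val + d - x.val)
  have hcong : (N:ℤ) ∣ (((y i).val : ℤ) + d - ((x i).val : ℤ)) := by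
    have : ((((y i).val : ℤ) + d : ℤ) : ZMod N) = ((((x i).val : ℤ) : ℤ) : ZMod N) := by
      push_cast
      rw [cast_val_eq, cast_val_eq, hcast]
      ring
    exact (ZMod.intCast_eq_intCast_iff _ _ _).mp this |>.symm.dvd
  have hcongL : (L:ℤ) ∣ (((y i).val : ℤ) + d - ((x i).val : ℤ)) := dvd_trans hdvd hcong
  -- nearRes ≡ x.val mod L
  obtain ⟨j, hj⟩ := nearRes_modeq (L := L) (x i)
  obtain ⟨hn1, hn2⟩ := nearRes_bound (L := L) (N := N) ⟨k, by omega⟩ (x i)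
  -- conclude nearRes = d
  have hnd : nearRes L (x i) = d := by
    have hdvd2 : (L:ℤ) ∣ (d - nearRes L (x i)) := by
      obtain ⟨u, hu⟩ := hcongL
      obtain ⟨v, hv⟩ := hyval
      exact ⟨u - v + j, by linarith [hj, hu, hv, mul_add (L:ℤ) u j]⟩
    have habs : |d - nearRes L (x i)| < (L:ℤ) := by
      rcases abs_cases (d - nearRes L (x i)) with ⟨he,_⟩|⟨he,_⟩ <;> omega
    have := Int.eq_zero_of_abs_lt_dvd hdvd2 habs
    omega
  show x i - ((nearRes L (x i) : ℤ) : ZMod N) = y i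
  rw [hnd, hcast]
  ring

lemma card_blockF {N : ℕ} [NeZero N] (R : ℤ) (hR : 0 ≤ R) (hRN : 2 * R < (N:ℤ)) (y : TPt N) :
    (blockF N R y).card = ((2 * R + 1).toNat) ^ 3 := by
  classical
  have hcard : (Fintype.piFinset (fun _ : Fin 3 => Finset.Icc (-R) R)).card
      = ((2 * R + 1).toNat) ^ 3 := by
    rw [Fintype.card_piFinset]
    simp [Int.card_Icc]
    congr 1
    omega
  rw [← hcard]
  apply Finset.card_bij (fun x _ => fun j => symRep N (x j - y j))
  · intro x hx
    rw [Fintype.mem_piFinset]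
    intro j
    rw [Finset.mem_Icc]
    have := mem_blockF.mp hx j
    rcases abs_cases (symRep N (x j - y j)) with ⟨he,_⟩|⟨he,_⟩ <;> constructor <;> omega
  · intro x hx x' hx' h
    funext j
    have h1 := congrFun h j
    have h2 : x j - y j = x' j - y j := by
      rw [← symRep_cast (x j - y j), ← symRep_cast (x' j - y j), h1]
    have h3 : x j = x' j := by
      have := congrArg (fun z => z + y j) h2
      simpa using this
    exact h3
  · intro t ht
    rw [Fintype.mem_piFinset] at ht
    refine ⟨fun j => y j + ((t j : ℤ) : ZMod N), ?_, ?_⟩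
    · rw [mem_blockF]
      intro j
      have hj := Finset.mem_Icc.mp (ht j)
      have : y j + ((t j : ℤ) : ZMod N) - y j = ((t j : ℤ) : ZMod N) := by ring
      rw [this, symRep_intCast (by omega) (by omega), abs_le]
      exact ⟨hj.1, hj.2⟩
    · funext j
      have hj := Finset.mem_Icc.mp (ht j)
      have : y j + ((t j : ℤ) : ZMod N) - y j = ((t j : ℤ) : ZMod N) := by ring
      rw [this, symRep_intCast (by omega) (by omega)]

lemma shiftT_zero {N : ℕ} (z : TPt N) (d : Fin 3) : shiftT z d 0 = z := by
  funext i; simp [shiftT]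

lemma segT_grad {N : ℕ} (f : TPt N → ℝ) (z : TPt N) (d : Fin 3) (t : ℤ) :
    segT (fun a b => f b - f a) z d t = f (shiftT z d t) - f z := by
  unfold segT
  split_ifs with h
  · have key := Finset.sum_range_sub (fun j => f (shiftT z d (j : ℤ))) t.toNat
    have h2 : ∀ j : ℕ, shiftT z d ((j : ℤ) + 1) = shiftT z d (((j + 1 : ℕ) : ℤ)) := by
      intro j; push_cast; rfl
    calc ∑ j ∈ Finset.range t.toNat, (f (shiftT z d ((j:ℤ) + 1)) - f (shiftT z d (j:ℤ)))
        = ∑ j ∈ Finset.range t.toNat,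
            ((fun j : ℕ => f (shiftT z d (j:ℤ))) (j+1) - (fun j : ℕ => f (shiftT z d (j:ℤ))) j) := by
          refine Finset.sum_congr rfl fun j _ => by rw [h2 j]
      _ = f (shiftT z d ((t.toNat : ℕ) : ℤ)) - f (shiftT z d ((0:ℕ) : ℤ)) := key
      _ = f (shiftT z d t) - f z := by
          rw [Int.toNat_of_nonneg h]
          norm_num [shiftT_zero]
  · have key := Finset.sum_range_sub (fun j => f (shiftT z d (-(j : ℤ)))) (-t).toNat
    have h2 : ∀ j : ℕ, shiftT z d (-(j : ℤ) - 1) = shiftT z d (-((j + 1 : ℕ) : ℤ)) := by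
      intro j; push_cast; ring_nf
    calc ∑ j ∈ Finset.range (-t).toNat, (f (shiftT z d (-(j:ℤ) - 1)) - f (shiftT z d (-(j:ℤ))))
        = ∑ j ∈ Finset.range (-t).toNat,
            ((fun j : ℕ => f (shiftT z d (-(j:ℤ)))) (j+1) - (fun j : ℕ => f (shiftT z d (-(j:ℤ)))) j) := by
          refine Finset.sum_congr rfl fun j _ => by rw [h2 j]
      _ = f (shiftT z d (-(((-t).toNat : ℕ) : ℤ))) - f (shiftT z d (-((0:ℕ) : ℤ))) := key
      _ = f (shiftT z d t) - f z := by
          rw [Int.toNat_of_nonneg (by omega : (0:ℤ) ≤ -t)]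
          norm_num [shiftT_zero]

lemma interPtT_zero {N : ℕ} (y x : TPt N) (π : Equiv.Perm (Fin 3)) : interPtT y x π 0 = y := by
  funext i; simp [interPtT]

lemma interPtT_three {N : ℕ} (y x : TPt N) (π : Equiv.Perm (Fin 3)) : interPtT y x π 3 = x := by
  funext i; simp [interPtT, (π.symm i).isLt]

lemma interPtT_step {N : ℕ} [NeZero N] (y x : TPt N) (π : Equiv.Perm (Fin 3)) (m : Fin 3) :
    shiftT (interPtT y x π (m : ℕ)) (π m) (symRep N (x (π m) - y (π m)))
      = interPtT y x π ((m : ℕ) + 1) := by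
  funext i
  unfold shiftT interPtT
  by_cases hi : i = π m
  · subst hi
    have h1 : ((π.symm (π m) : Fin 3) : ℕ) = (m : ℕ) := by rw [Equiv.symm_apply_apply]
    rw [if_pos rfl, h1, if_neg (lt_irrefl ((m:ℕ))), if_pos (show (m:ℕ) < (m:ℕ)+1 by omega),
      symRep_cast]
    ring
  · rw [if_neg hi]
    have hne : ((π.symm i : Fin 3) : ℕ) ≠ (m : ℕ) := by
      intro hc
      apply hi
      have : π.symm i = m := Fin.ext hc
      rw [← this, Equiv.apply_symm_apply]
    by_cases hlt : ((π.symm i : Fin 3) : ℕ) < (m : ℕ)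
    · rw [if_pos hlt, if_pos (by omega)]
    · rw [if_neg hlt, if_neg (by omega)]

lemma gammaSumT_grad {N : ℕ} [NeZero N] (f : TPt N → ℝ) (π : Equiv.Perm (Fin 3)) (y x : TPt N) :
    gammaSumT (fun a b => f b - f a) π y x = f x - f y := by
  unfold gammaSumT
  have hterm : ∀ m : Fin 3,
      segT (fun a b => f b - f a) (interPtT y x π (m : ℕ)) (π m) (symRep N (x (π m) - y (π m)))
      = f (interPtT y x π ((m : ℕ) + 1)) - f (interPtT y x π (m : ℕ)) := by
    intro m
    rw [segT_grad, interPtT_step]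
  rw [Fin.sum_univ_three]
  rw [hterm 0, hterm 1, hterm 2]
  norm_num [interPtT_zero, interPtT_three]

lemma tauBlk_grad {N : ℕ} [NeZero N] (f : TPt N → ℝ) (y x : TPt N) :
    tauBlk (fun a b => f b - f a) y x = f x - f y := by
  unfold tauBlk
  rw [Finset.sum_congr rfl (fun π _ => gammaSumT_grad f π y x)]
  rw [Finset.sum_const]
  simp [Fintype.card_perm]
  norm_num [Nat.factorial]
  ring

lemma segT_add {N : ℕ} (A B : TPt N → TPt N → ℝ) (z : TPt N) (d : Fin 3) (t : ℤ) :
    segT (fun a b => A a b + B a b) z d t = segT A z d t + segT B z d t := by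
  unfold segT
  split_ifs <;> rw [← Finset.sum_add_distrib]

lemma tauBlk_add {N : ℕ} (A B : TPt N → TPt N → ℝ) (y x : TPt N) :
    tauBlk (fun a b => A a b + B a b) y x = tauBlk A y x + tauBlk B y x := by
  unfold tauBlk gammaSumT
  rw [← mul_add, ← Finset.sum_add_distrib]
  congr 1
  refine Finset.sum_congr rfl fun π _ => ?_
  rw [← Finset.sum_add_distrib]
  exact Finset.sum_congr rfl fun m _ => segT_add A B _ _ _

lemma tauBlk_self {N : ℕ} [NeZero N] (A : TPt N → TPt N → ℝ) (y : TPt N) :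
    tauBlk A y y = 0 := by
  unfold tauBlk gammaSumT
  have : ∀ π : Equiv.Perm (Fin 3), ∀ m : Fin 3,
      segT A (interPtT y y π (m : ℕ)) (π m) (symRep N (y (π m) - y (π m))) = 0 := by
    intro π m
    rw [sub_self, symRep_zero]
    simp [segT]
  simp only [this, Finset.sum_const_zero, mul_zero]

lemma tauBlk_split {N : ℕ} [NeZero N] (Z : TPt N → TPt N → ℝ) (f : TPt N → ℝ) (y x : TPt N) :
    tauBlk (fun a b => Z a b + (f b - f a)) y x = tauBlk Z y x + (f x - f y) := by
  have h : tauBlk (fun a b => Z a b + (f b - f a)) y x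
      = tauBlk Z y x + tauBlk (fun a b => f b - f a) y x :=
    tauBlk_add Z (fun a b => f b - f a) y x
  rw [h, tauBlk_grad]

/-- For a gauge field `Z` on `T`, the function `μ = ℳZ` satisfies, for
every coarse site `y`: `(τZ)(y,x) + μ(x) − μ(y) = 0` for all `x ∈ B(y)`, and
`Σ_{x ∈ B(y)} μ(x) = 0`; moreover `μ` is the unique function with these two properties;
equivalently `τ(Z + ∂μ)(y,x) = 0` for all `x ∈ B(y)` and all coarse `y`. -/
theorem axial_gauge_projection (L M : ℕ) (hL3 : 3 ≤ L) (hLodd : Odd L) (hM : 2 ≤ M)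
    [NeZero (L ^ M)]
    (Z : TPt (L ^ M) → TPt (L ^ M) → ℝ) (hZ : ∀ x x', Z x x' = - Z x' x) :
    (∀ y : TPt (L ^ M), isCoarse L (L ^ M) y →
        (∀ x ∈ blockF (L ^ M) (((L : ℤ) - 1) / 2) y,
          tauBlk Z y x + Mmap L Z x - Mmap L Z y = 0) ∧
        ∑ x ∈ blockF (L ^ M) (((L : ℤ) - 1) / 2) y, Mmap L Z x = 0) ∧
    (∀ μ' : TPt (L ^ M) → ℝ,
        (∀ y : TPt (L ^ M), isCoarse L (L ^ M) y →
          (∀ x ∈ blockF (L ^ M) (((L : ℤ) - 1) / 2) y,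
            tauBlk Z y x + μ' x - μ' y = 0) ∧
          ∑ x ∈ blockF (L ^ M) (((L : ℤ) - 1) / 2) y, μ' x = 0) →
        μ' = Mmap L Z) ∧
    (∀ y : TPt (L ^ M), isCoarse L (L ^ M) y →
        ∀ x ∈ blockF (L ^ M) (((L : ℤ) - 1) / 2) y,
          tauBlk (fun a b => Z a b + (Mmap L Z b - Mmap L Z a)) y x = 0) := by
  have hk := hLodd
  obtain ⟨k, hk⟩ := hk
  have hLN : (L:ℤ) ≤ ((L ^ M : ℕ) : ℤ) := by
    exact_mod_cast Nat.le_self_pow (by omega) L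
  have hdvd : (L:ℤ) ∣ ((L ^ M : ℕ) : ℤ) :=
    Int.natCast_dvd_natCast.mpr (dvd_pow_self L (by omega))
  have hR0 : 0 ≤ ((L:ℤ) - 1) / 2 := by omega
  have h2R : 2 * (((L:ℤ) - 1) / 2) < ((L ^ M : ℕ) : ℤ) := by omega
  have hLne : (L:ℝ) ≠ 0 := by positivity
  have hcards : ∀ y : TPt (L ^ M), (blockF (L ^ M) (((L:ℤ) - 1) / 2) y).card = L ^ 3 := by
    intro y
    rw [card_blockF _ hR0 h2R y]
    have h1 : (2 * (((L:ℤ) - 1) / 2) + 1).toNat = L := by omega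
    rw [h1]
  have hcp : ∀ y : TPt (L ^ M), isCoarse L (L ^ M) y →
      ∀ x ∈ blockF (L ^ M) (((L:ℤ) - 1) / 2) y, coarsePart L x = y := by
    intro y hy x hx
    exact coarsePart_eq_of_mem hLodd hL3 hdvd hLN hy hx
  have hself : ∀ y : TPt (L ^ M), y ∈ blockF (L ^ M) (((L:ℤ) - 1) / 2) y := by
    intro y
    rw [mem_blockF]
    intro i
    rw [sub_self, symRep_zero]
    simpa using hR0
  have hMx : ∀ y : TPt (L ^ M), isCoarse L (L ^ M) y →
      ∀ x ∈ blockF (L ^ M) (((L:ℤ) - 1) / 2) y,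
      Mmap L Z x = - tauBlk Z y x
        + ((L : ℝ) ^ 3)⁻¹ * ∑ x' ∈ blockF (L^M) (((L:ℤ) - 1) / 2) y, tauBlk Z y x' := by
    intro y hy x hx
    unfold Mmap
    rw [hcp y hy x hx]
  -- Part 1
  have part1 : ∀ y : TPt (L ^ M), isCoarse L (L ^ M) y →
      (∀ x ∈ blockF (L ^ M) (((L : ℤ) - 1) / 2) y,
        tauBlk Z y x + Mmap L Z x - Mmap L Z y = 0) ∧
      ∑ x ∈ blockF (L ^ M) (((L : ℤ) - 1) / 2) y, Mmap L Z x = 0 := by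
    intro y hy
    constructor
    · intro x hx
      rw [hMx y hy x hx, hMx y hy y (hself y), tauBlk_self]
      ring
    · rw [Finset.sum_congr rfl (fun x hx => hMx y hy x hx)]
      rw [Finset.sum_add_distrib, Finset.sum_neg_distrib, Finset.sum_const, hcards y,
        nsmul_eq_mul]
      push_cast
      field_simp
      ring
  refine ⟨part1, ?_, ?_⟩
  · -- uniqueness
    intro μ' hμ'
    funext x
    set y := coarsePart L x with hy
    have hyc : isCoarse L (L ^ M) y := coarsePart_isCoarse x
    have hxy : x ∈ blockF (L ^ M) (((L:ℤ) - 1) / 2) y := mem_blockF_coarsePart hLodd hLN x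
    obtain ⟨hA, hB⟩ := hμ' y hyc
    have hval : ∀ x' ∈ blockF (L ^ M) (((L:ℤ) - 1) / 2) y,
        μ' x' = μ' y - tauBlk Z y x' := by
      intro x' hx'
      have := hA x' hx'
      linarith
    have hsum : (((L:ℝ) ^ 3)) * μ' y
        - ∑ x' ∈ blockF (L ^ M) (((L:ℤ) - 1) / 2) y, tauBlk Z y x' = 0 := by
      have h1 : ∑ x' ∈ blockF (L ^ M) (((L:ℤ) - 1) / 2) y, μ' x'
          = ∑ x' ∈ blockF (L ^ M) (((L:ℤ) - 1) / 2) y, (μ' y - tauBlk Z y x') :=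
        Finset.sum_congr rfl hval
      rw [hB] at h1
      rw [Finset.sum_sub_distrib, Finset.sum_const, hcards y, nsmul_eq_mul] at h1
      push_cast at h1
      linarith
    have hμy : μ' y = ((L:ℝ) ^ 3)⁻¹
        * ∑ x' ∈ blockF (L ^ M) (((L:ℤ) - 1) / 2) y, tauBlk Z y x' := by
      have hL3ne : ((L:ℝ) ^ 3) ≠ 0 := by positivity
      field_simp
      linarith
    rw [hval x hxy, hμy]
    unfold Mmap
    rw [← hy]
    ring
  · -- third part
    intro y hy x hx
    rw [tauBlk_split Z (Mmap L Z) y x]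
    have := (part1 y hy).1 x hx
    linarith
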